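/- Let ν be a probability measure on (S, B). For each n ≥ 0, let H_n be a countable measurable partition of S with ν(H) > 0 for every H ∈ H_n, such that H_{n+1} is finer than H_n (every element of H_{n+1} is contained in some element of H_n); write H_y^n for the unique element of H_n containing y and ν(· | H_y^n) for the conditional probability A ↦ ν(A ∩ H_y^n)/ν(H_y^n). Let q_n : S^n → [0,1] be measurable (q_0 constant) and define the strategy σ by σ_0 = ν and σ_{n+1}(x, y) = q_n(x) σ_n(x) + (1 − q_n(x)) ν(· | H_y^n) for all n ≥ 0, x ∈ S^n, y ∈ S. Then the coordinate process X is conditionally identically distributed (c.i.d.) under P_σ. -/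

import Mathlib

open MeasureTheory ProbabilityTheory
open scoped ENNReal

namespace PredictiveBayes

variable {S : Type*} [MeasurableSpace S]

/-- The finite-dimensional distributions determined by a strategy `κ`. -/
noncomputable def stratFDD (κ : ∀ n, Kernel (Fin n → S) S) : ∀ n, Measure (Fin n → S)
  | 0 => Measure.dirac (fun i : Fin 0 => i.elim0)
  | n + 1 => (stratFDD κ n).bind (fun x => ((κ n) x).map (Fin.snoc x))

/-- `P` is the Ionescu–Tulcea law `P_κ` of the strategy `κ`. -/
def IsStrategyLaw (κ : ∀ n, Kernel (Fin n → S) S) (P : Measure (ℕ → S)) : Prop :=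
  ∀ n, P.map (fun ω (i : Fin n) => ω i) = stratFDD κ n

/-- The process `Y` is conditionally identically distributed (c.i.d.) under `P`. -/
def CID {Ω : Type*} [MeasurableSpace Ω] (P : Measure Ω) (Y : ℕ → Ω → S) : Prop :=
  P.map (Y 1) = P.map (Y 0) ∧
  ∀ n m : ℕ, 1 ≤ n → n ≤ m → ∀ A : Set S, MeasurableSet A →
    (P[Set.indicator ((Y m) ⁻¹' A) (fun _ => (1 : ℝ)) |
        MeasurableSpace.comap (fun ω (i : Fin n) => Y i ω) inferInstance])
      =ᵐ[P]
    (P[Set.indicator ((Y n) ⁻¹' A) (fun _ => (1 : ℝ)) |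
        MeasurableSpace.comap (fun ω (i : Fin n) => Y i ω) inferInstance])

set_option linter.unusedSectionVars false

section Aux

variable {S : Type*} [MeasurableSpace S]

lemma measurable_snocFun {n : ℕ} :
    Measurable (Function.uncurry (fun (x : Fin n → S) (y : S) => Fin.snoc x y) :
      (Fin n → S) × S → Fin (n + 1) → S) := by
  apply measurable_pi_lambda
  intro i
  refine Fin.lastCases ?_ ?_ i
  · simp only [Function.uncurry, Fin.snoc_last]
    exact measurable_snd
  · intro j
    simp only [Function.uncurry, Fin.snoc_castSucc]
    exact (measurable_pi_apply j).comp measurable_fst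

lemma measurable_snoc' {n : ℕ} (x : Fin n → S) :
    Measurable (fun y : S => (Fin.snoc x y : Fin (n + 1) → S)) :=
  measurable_snocFun.comp (measurable_const.prodMk measurable_id)

lemma snoc_castLE {k n : ℕ} (h1 : n ≤ k + 1) (h : n ≤ k) (x : Fin k → S) (y : S) (i : Fin n) :
    (Fin.snoc x y : Fin (k + 1) → S) (Fin.castLE h1 i) = x (Fin.castLE h i) := by
  have h2 : Fin.castLE h1 i = Fin.castSucc (Fin.castLE h i) := rfl
  rw [h2, Fin.snoc_castSucc]

lemma measurable_measure_map_kernel {α β γ : Type*} [MeasurableSpace α] [MeasurableSpace β]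
    [MeasurableSpace γ] (κ' : Kernel α β) [IsSFiniteKernel κ'] (g : α → β → γ)
    (hg : Measurable (Function.uncurry g)) :
    Measurable (fun a => (κ' a).map (g a)) := by
  apply Measure.measurable_of_measurable_coe
  intro s hs
  have h1 : ∀ a, (κ' a).map (g a) s = κ' a (Prod.mk a ⁻¹' (Function.uncurry g ⁻¹' s)) := by
    intro a
    rw [Measure.map_apply hg.of_uncurry_left hs]
    rfl
  simp_rw [h1]
  exact Kernel.measurable_kernel_prodMk_left (hg hs)

lemma map_bind' {α β γ : Type*} [MeasurableSpace α] [MeasurableSpace β] [MeasurableSpace γ]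
    (μ : Measure α) (f : α → Measure β) (g : β → γ) (hf : Measurable f) (hg : Measurable g) :
    (μ.bind f).map g = μ.bind (fun a => (f a).map g) := by
  have hmg : Measurable fun a => (f a).map g := (Measure.measurable_map g hg).comp hf
  ext s hs
  rw [Measure.map_apply hg hs, Measure.bind_apply (hg hs) hf.aemeasurable, Measure.bind_apply hs hmg.aemeasurable]
  simp_rw [Measure.map_apply hg hs]

lemma bind_map' {α β γ : Type*} [MeasurableSpace α] [MeasurableSpace β] [MeasurableSpace γ]
    (μ : Measure α) (f : α → β) (g : β → Measure γ) (hf : Measurable f) (hg : Measurable g) :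
    (μ.map f).bind g = μ.bind (g ∘ f) := by
  have hgs : ∀ s : Set γ, MeasurableSet s → Measurable fun b => g b s :=
    fun s hs => (Measure.measurable_coe hs).comp hg
  ext s hs
  rw [Measure.bind_apply hs hg.aemeasurable, lintegral_map (hgs s hs) hf, Measure.bind_apply hs (hg.comp hf).aemeasurable]
  rfl

lemma cond_inter (ν : Measure S) [IsProbabilityMeasure ν] {H : Set S} (hH : MeasurableSet H)
    (hpos : 0 < ν H) (A : Set S) : ν (A ∩ H) = ν[|H] A * ν H := by
  rw [cond_apply hH, mul_comm, ← mul_assoc,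
    ENNReal.mul_inv_cancel hpos.ne' (measure_ne_top ν H), one_mul, Set.inter_comm]

end Aux

section Part

variable {S : Type*} [MeasurableSpace S]
variable (ν : Measure S) [IsProbabilityMeasure ν] (𝓗 : ℕ → Set (Set S))
variable (Hf : ℕ → S → Set S)

lemma finer_le (h𝓗finer : ∀ n, ∀ H ∈ 𝓗 (n + 1), ∃ H' ∈ 𝓗 n, H ⊆ H') :
    ∀ n m, n ≤ m → ∀ H ∈ 𝓗 m, ∃ H' ∈ 𝓗 n, H ⊆ H' := by
  intro n m hnm
  induction m, hnm using Nat.le_induction with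
  | base => exact fun H hH => ⟨H, hH, subset_rfl⟩
  | succ m hm ih =>
    intro H hH
    obtain ⟨H1, hH1, hsub⟩ := h𝓗finer m H hH
    obtain ⟨H', hH', hsub'⟩ := ih H1 hH1
    exact ⟨H', hH', hsub.trans hsub'⟩

lemma Hf_eq (h𝓗disj : ∀ n, (𝓗 n).PairwiseDisjoint id)
    (hHf : ∀ n y, Hf n y ∈ 𝓗 n ∧ y ∈ Hf n y)
    {n : ℕ} {H : Set S} (hH : H ∈ 𝓗 n) {y : S} (hy : y ∈ H) : H = Hf n y := by
  by_contra hne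
  exact Set.disjoint_left.1 (h𝓗disj n hH (hHf n y).1 hne) hy (hHf n y).2

lemma cond_adapted' {H0 H : Set S} (hH0 : MeasurableSet H0) (hH : MeasurableSet H)
    (hpos0 : 0 < ν H0) (hpos : 0 < ν H) (hcase : H ⊆ H0 ∨ H ∩ H0 = ∅) (A : Set S) :
    ν[|H0] (A ∩ H) = ν[|H] A * ν[|H0] H := by
  rcases hcase with hsub | hdisj
  · rw [cond_apply hH0, cond_apply hH, cond_apply hH0]
    have h1 : H0 ∩ (A ∩ H) = H ∩ A := by
      rw [Set.inter_eq_self_of_subset_right (((Set.inter_subset_right)).trans hsub),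
        Set.inter_comm]
    have h2 : H0 ∩ H = H := Set.inter_eq_self_of_subset_right hsub
    rw [h1, h2]
    have hc : (ν H)⁻¹ * ν H = 1 := ENNReal.inv_mul_cancel hpos.ne' (measure_ne_top ν H)
    calc (ν H0)⁻¹ * ν (H ∩ A)
        = ((ν H)⁻¹ * ν H) * ((ν H0)⁻¹ * ν (H ∩ A)) := by rw [hc, one_mul]
      _ = (ν H)⁻¹ * ν (H ∩ A) * ((ν H0)⁻¹ * ν H) := by ring
  · have hz1 : ν (H0 ∩ (A ∩ H)) = 0 :=
      measure_mono_null (fun z hz => show z ∈ H ∩ H0 from ⟨hz.2.2, hz.1⟩)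
        (by rw [hdisj]; exact measure_empty)
    have hz2 : ν (H0 ∩ H) = 0 :=
      measure_mono_null (fun z hz => show z ∈ H ∩ H0 from ⟨hz.2, hz.1⟩)
        (by rw [hdisj]; exact measure_empty)
    rw [cond_apply hH0, cond_apply hH0, hz1, hz2]
    simp

variable (q : ∀ n, (Fin n → S) → ℝ) (κ : ∀ n, Kernel (Fin n → S) S)

lemma kernel_adapted [∀ n, IsMarkovKernel (κ n)]
    (h𝓗meas : ∀ n, ∀ H ∈ 𝓗 n, MeasurableSet H)
    (h𝓗pos : ∀ n, ∀ H ∈ 𝓗 n, 0 < ν H)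
    (h𝓗disj : ∀ n, (𝓗 n).PairwiseDisjoint id)
    (h𝓗finer : ∀ n, ∀ H ∈ 𝓗 (n + 1), ∃ H' ∈ 𝓗 n, H ⊆ H')
    (hHf : ∀ n y, Hf n y ∈ 𝓗 n ∧ y ∈ Hf n y)
    (hκ0 : ∀ x : Fin 0 → S, κ 0 x = ν)
    (hκ : ∀ n (w : Fin (n + 1) → S),
      κ (n + 1) w = ENNReal.ofReal (q n (Fin.init w)) • κ n (Fin.init w) +
        ENNReal.ofReal (1 - q n (Fin.init w)) • ν[|Hf n (w (Fin.last n))]) :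
    ∀ n (x : Fin n → S) (m : ℕ), n ≤ m → ∀ H ∈ 𝓗 m, ∀ A : Set S,
      κ n x (A ∩ H) = ν[|H] A * κ n x H := by
  intro n
  induction n with
  | zero =>
    intro x m _ H hH A
    rw [hκ0 x]
    exact cond_inter ν (h𝓗meas m H hH) (h𝓗pos m H hH) A
  | succ n ih =>
    intro x m hm H hH A
    have hnm : n ≤ m := le_trans (Nat.le_succ n) hm
    rw [hκ n x]
    simp only [Measure.coe_add, Pi.add_apply, Measure.smul_apply, smul_eq_mul]
    have hH0 : Hf n (x (Fin.last n)) ∈ 𝓗 n := (hHf n _).1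
    have hcase : H ⊆ Hf n (x (Fin.last n)) ∨ H ∩ Hf n (x (Fin.last n)) = ∅ := by
      obtain ⟨H', hH', hsub⟩ := finer_le 𝓗 h𝓗finer n m hnm H hH
      by_cases he : H' = Hf n (x (Fin.last n))
      · exact Or.inl (he ▸ hsub)
      · exact Or.inr (Set.disjoint_iff_inter_eq_empty.1
          ((h𝓗disj n hH' hH0 he).mono_left hsub))
    rw [ih (Fin.init x) m hnm H hH A,
      cond_adapted' ν (h𝓗meas n _ hH0) (h𝓗meas m H hH) (h𝓗pos n _ hH0) (h𝓗pos m H hH) hcase A]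
    ring

lemma cond_Hf_repr (h𝓗disj : ∀ n, (𝓗 n).PairwiseDisjoint id)
    (hHf : ∀ n y, Hf n y ∈ 𝓗 n ∧ y ∈ Hf n y) (n : ℕ) (A : Set S) (y : S) :
    ν[|Hf n y] A = ∑' H : 𝓗 n, Set.indicator (H : Set S) (fun _ => ν[|(H : Set S)] A) y := by
  symm
  rw [tsum_eq_single (⟨Hf n y, (hHf n y).1⟩ : 𝓗 n) ?_]
  · exact Set.indicator_of_mem (hHf n y).2 _
  · intro H hne
    apply Set.indicator_of_notMem
    intro hy
    exact hne (Subtype.ext (Hf_eq 𝓗 Hf h𝓗disj hHf H.2 hy))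

lemma measurable_cond_Hf (h𝓗count : ∀ n, (𝓗 n).Countable)
    (h𝓗meas : ∀ n, ∀ H ∈ 𝓗 n, MeasurableSet H)
    (h𝓗disj : ∀ n, (𝓗 n).PairwiseDisjoint id)
    (hHf : ∀ n y, Hf n y ∈ 𝓗 n ∧ y ∈ Hf n y) (n : ℕ) (A : Set S) :
    Measurable fun y => ν[|Hf n y] A := by
  haveI : Countable (𝓗 n) := (h𝓗count n).to_subtype
  simp_rw [cond_Hf_repr ν 𝓗 Hf h𝓗disj hHf n A]
  exact Measurable.ennreal_tsum fun H => measurable_const.indicator (h𝓗meas n H.1 H.2)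

lemma lintegral_cond_Hf (h𝓗count : ∀ n, (𝓗 n).Countable)
    (h𝓗meas : ∀ n, ∀ H ∈ 𝓗 n, MeasurableSet H)
    (h𝓗disj : ∀ n, (𝓗 n).PairwiseDisjoint id)
    (h𝓗cover : ∀ n, ⋃₀ (𝓗 n) = Set.univ)
    (hHf : ∀ n y, Hf n y ∈ 𝓗 n ∧ y ∈ Hf n y) (n : ℕ) (μ : Measure S) (A : Set S)
    (hadapt : ∀ H ∈ 𝓗 n, μ (A ∩ H) = ν[|H] A * μ H) :
    ∫⁻ y, ν[|Hf n y] A ∂μ = μ A := by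
  haveI : Countable (𝓗 n) := (h𝓗count n).to_subtype
  simp_rw [cond_Hf_repr ν 𝓗 Hf h𝓗disj hHf n A]
  have hmeasF : ∀ H : 𝓗 n,
      AEMeasurable (Set.indicator (H : Set S) (fun _ => ν[|(H : Set S)] A)) μ :=
    fun H => (measurable_const.indicator (h𝓗meas n H.1 H.2)).aemeasurable
  rw [lintegral_tsum hmeasF]
  have h1 : ∀ H : 𝓗 n,
      ∫⁻ y, Set.indicator (H : Set S) (fun _ => ν[|(H : Set S)] A) y ∂μ
        = μ (A ∩ (H : Set S)) := by
    intro H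
    rw [lintegral_indicator_const (h𝓗meas n H.1 H.2), ← hadapt H.1 H.2]
  rw [tsum_congr h1]
  have h2 : μ A = μ.restrict A (⋃₀ 𝓗 n) := by
    rw [h𝓗cover n, Measure.restrict_apply_univ]
  rw [h2, measure_sUnion (h𝓗count n) (h𝓗disj n) (h𝓗meas n)]
  exact tsum_congr fun H => by
    rw [Measure.restrict_apply (h𝓗meas n H.1 H.2), Set.inter_comm]

lemma step_bind [∀ n, IsMarkovKernel (κ n)]
    (h𝓗count : ∀ n, (𝓗 n).Countable)
    (h𝓗meas : ∀ n, ∀ H ∈ 𝓗 n, MeasurableSet H)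
    (h𝓗pos : ∀ n, ∀ H ∈ 𝓗 n, 0 < ν H)
    (h𝓗disj : ∀ n, (𝓗 n).PairwiseDisjoint id)
    (h𝓗cover : ∀ n, ⋃₀ (𝓗 n) = Set.univ)
    (h𝓗finer : ∀ n, ∀ H ∈ 𝓗 (n + 1), ∃ H' ∈ 𝓗 n, H ⊆ H')
    (hHf : ∀ n y, Hf n y ∈ 𝓗 n ∧ y ∈ Hf n y)
    (hq01 : ∀ n x, q n x ∈ Set.Icc (0 : ℝ) 1)
    (hκ0 : ∀ x : Fin 0 → S, κ 0 x = ν)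
    (hκ : ∀ n (w : Fin (n + 1) → S),
      κ (n + 1) w = ENNReal.ofReal (q n (Fin.init w)) • κ n (Fin.init w) +
        ENNReal.ofReal (1 - q n (Fin.init w)) • ν[|Hf n (w (Fin.last n))]) (n : ℕ)
    (x : Fin n → S) :
    (κ n x).bind (fun y => κ (n + 1) (Fin.snoc x y)) = κ n x := by
  have hmeasf : Measurable fun y => κ (n + 1) (Fin.snoc x y) :=
    (Kernel.measurable _).comp (measurable_snoc' x)
  ext A hA
  rw [Measure.bind_apply hA hmeasf.aemeasurable]
  have hint : ∀ y, κ (n + 1) (Fin.snoc x y) A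
      = ENNReal.ofReal (q n x) * κ n x A + ENNReal.ofReal (1 - q n x) * ν[|Hf n y] A := by
    intro y
    rw [hκ n (Fin.snoc x y)]
    simp [Fin.init_snoc, Fin.snoc_last]
  simp_rw [hint]
  rw [lintegral_add_left measurable_const,
    lintegral_const_mul _ (measurable_cond_Hf ν 𝓗 Hf h𝓗count h𝓗meas h𝓗disj hHf n A),
    lintegral_cond_Hf ν 𝓗 Hf h𝓗count h𝓗meas h𝓗disj h𝓗cover hHf n (κ n x) A
      (fun H hH => kernel_adapted ν 𝓗 Hf q κ h𝓗meas h𝓗pos h𝓗disj h𝓗finer hHf hκ0 hκ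
        n x n le_rfl H hH A),
    lintegral_const, measure_univ, mul_one, ← add_mul,
    ← ENNReal.ofReal_add (hq01 n x).1 (by linarith [(hq01 n x).2])]
  norm_num

lemma fdd_key [∀ n, IsMarkovKernel (κ n)]
    (h𝓗count : ∀ n, (𝓗 n).Countable)
    (h𝓗meas : ∀ n, ∀ H ∈ 𝓗 n, MeasurableSet H)
    (h𝓗pos : ∀ n, ∀ H ∈ 𝓗 n, 0 < ν H)
    (h𝓗disj : ∀ n, (𝓗 n).PairwiseDisjoint id)
    (h𝓗cover : ∀ n, ⋃₀ (𝓗 n) = Set.univ)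
    (h𝓗finer : ∀ n, ∀ H ∈ 𝓗 (n + 1), ∃ H' ∈ 𝓗 n, H ⊆ H')
    (hHf : ∀ n y, Hf n y ∈ 𝓗 n ∧ y ∈ Hf n y)
    (hq01 : ∀ n x, q n x ∈ Set.Icc (0 : ℝ) 1)
    (hκ0 : ∀ x : Fin 0 → S, κ 0 x = ν)
    (hκ : ∀ n (w : Fin (n + 1) → S),
      κ (n + 1) w = ENNReal.ofReal (q n (Fin.init w)) • κ n (Fin.init w) +
        ENNReal.ofReal (1 - q n (Fin.init w)) • ν[|Hf n (w (Fin.last n))])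
    (n m : ℕ) (hnm : n ≤ m) :
    (stratFDD κ (m + 1)).map
        (fun x => ((fun i : Fin n => x (Fin.castLE (Nat.le_succ_of_le hnm) i)), x (Fin.last m)))
      = (stratFDD κ (n + 1)).map
        (fun x => ((fun i : Fin n => x (Fin.castLE (Nat.le_succ n) i)), x (Fin.last n))) := by
  have hGmeas : ∀ (k : ℕ) (h : n ≤ k + 1),
      Measurable (fun x : Fin (k + 1) → S =>
        ((fun i : Fin n => x (Fin.castLE h i)), x (Fin.last k))) :=
    fun k h => Measurable.prodMk (measurable_pi_lambda _ fun i => measurable_pi_apply _)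
      (measurable_pi_apply _)
  have hsnocm : ∀ k, Measurable fun (x : Fin k → S) => ((κ k x).map (Fin.snoc x) : Measure (Fin (k + 1) → S)) :=
    fun k => measurable_measure_map_kernel (κ k) _ measurable_snocFun
  have hcmeas : ∀ (k : ℕ) (h : n ≤ k),
      Measurable (fun x : Fin k → S =>
        (κ k x).map (fun z => ((fun i : Fin n => x (Fin.castLE h i)), z))) := by
    intro k h
    exact measurable_measure_map_kernel (κ k) _
      (Measurable.prodMk
        (measurable_pi_lambda _ fun i => (measurable_pi_apply _).comp measurable_fst)
        measurable_snd)
  have key : ∀ (k : ℕ) (hk : n ≤ k),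
      (stratFDD κ (k + 1)).map
          (fun x => ((fun i : Fin n => x (Fin.castLE (Nat.le_succ_of_le hk) i)), x (Fin.last k)))
        = (stratFDD κ k).bind
          (fun x => (κ k x).map (fun z => ((fun i : Fin n => x (Fin.castLE hk i)), z))) := by
    intro k hk
    rw [stratFDD, map_bind' _ _ _ (hsnocm k) (hGmeas k (Nat.le_succ_of_le hk))]
    congr 1
    funext x
    rw [Measure.map_map (hGmeas k (Nat.le_succ_of_le hk)) (measurable_snoc' x)]
    congr 1
    funext z
    simp only [Function.comp_apply, Fin.snoc_last, Prod.mk.injEq]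
    exact ⟨funext fun i => snoc_castLE _ hk x z i, trivial⟩
  induction m, hnm using Nat.le_induction with
  | base => rfl
  | succ m hnm ih =>
    rw [key (m + 1) (Nat.le_succ_of_le hnm)]
    rw [stratFDD, Measure.bind_bind (hsnocm m).aemeasurable (hcmeas (m + 1) (Nat.le_succ_of_le hnm)).aemeasurable]
    have hF : (fun x : Fin m → S => ((κ m x).map (Fin.snoc x)).bind
          (fun x' => (κ (m + 1) x').map
            (fun z => ((fun i : Fin n => x' (Fin.castLE (Nat.le_succ_of_le hnm) i)), z))))
        = fun x : Fin m → S =>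
            (κ m x).map (fun z => ((fun i : Fin n => x (Fin.castLE hnm i)), z)) := by
      funext x
      rw [bind_map' _ _ _ (measurable_snoc' x) (hcmeas (m + 1) (Nat.le_succ_of_le hnm))]
      have hg : ((fun x' : Fin (m + 1) → S => (κ (m + 1) x').map
            (fun z => ((fun i : Fin n => x' (Fin.castLE (Nat.le_succ_of_le hnm) i)), z)))
              ∘ Fin.snoc x)
          = fun y => (κ (m + 1) (Fin.snoc x y)).map
            (fun z => ((fun i : Fin n => x (Fin.castLE hnm i)), z)) := by
        funext y
        show (κ (m + 1) (Fin.snoc x y)).map _ = _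
        congr 1
        funext z
        exact Prod.ext (funext fun i => snoc_castLE _ hnm x y i) rfl
      have hh : Measurable fun z : S => ((fun i : Fin n => x (Fin.castLE hnm i)), z) :=
        measurable_const.prodMk measurable_id
      have hfm : Measurable fun y : S => κ (m + 1) (Fin.snoc x y) :=
        (Kernel.measurable _).comp (measurable_snoc' x)
      rw [hg, ← map_bind' (κ m x) _ _ hfm hh,
        step_bind ν 𝓗 Hf q κ h𝓗count h𝓗meas h𝓗pos h𝓗disj h𝓗cover h𝓗finer hHf hq01 hκ0 hκ m x]
    rw [hF, ← key m hnm, ih]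

end Part

/-- **Theorem (finer countable partitions give a c.i.d. strategy).** Let `ν` be a
probability measure and, for each `n`, let `𝓗 n` be a countable measurable partition
of `S`, with `ν`-positive elements, such that `𝓗 (n+1)` is finer than `𝓗 n`; `Hf n y`
denotes the element of `𝓗 n` containing `y`. Let `q_n : Sⁿ → [0,1]` be measurable and
let `κ` be the strategy defined recursively by `σ_0 = ν` and
`σ_{n+1}(x, y) = q_n(x) σ_n(x) + (1 - q_n(x)) ν(· | H_y^n)`. Then the coordinate
process is c.i.d. under `P_κ`. -/
theorem finerPartitions_cid {S : Type*} [MeasurableSpace S] [StandardBorelSpace S] [Nonempty S]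
    (ν : Measure S) [IsProbabilityMeasure ν]
    (𝓗 : ℕ → Set (Set S)) (h𝓗count : ∀ n, (𝓗 n).Countable)
    (h𝓗meas : ∀ n, ∀ H ∈ 𝓗 n, MeasurableSet H)
    (h𝓗pos : ∀ n, ∀ H ∈ 𝓗 n, 0 < ν H)
    (h𝓗disj : ∀ n, (𝓗 n).PairwiseDisjoint id)
    (h𝓗cover : ∀ n, ⋃₀ (𝓗 n) = Set.univ)
    (h𝓗finer : ∀ n, ∀ H ∈ 𝓗 (n + 1), ∃ H' ∈ 𝓗 n, H ⊆ H')
    (Hf : ℕ → S → Set S) (hHf : ∀ n (y : S), Hf n y ∈ 𝓗 n ∧ y ∈ Hf n y)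
    (q : ∀ n, (Fin n → S) → ℝ) (hqmeas : ∀ n, Measurable (q n))
    (hq01 : ∀ n x, q n x ∈ Set.Icc (0 : ℝ) 1)
    (κ : ∀ n, Kernel (Fin n → S) S) [∀ n, IsMarkovKernel (κ n)]
    (hκ0 : ∀ x : Fin 0 → S, κ 0 x = ν)
    (hκ : ∀ n (w : Fin (n + 1) → S),
      κ (n + 1) w = ENNReal.ofReal (q n (Fin.init w)) • κ n (Fin.init w) +
        ENNReal.ofReal (1 - q n (Fin.init w)) • ν[|Hf n (w (Fin.last n))])
    (P : Measure (ℕ → S)) [IsProbabilityMeasure P] (hP : IsStrategyLaw κ P) :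
    CID P (fun n ω => ω n) := by
  have hπ : ∀ k : ℕ, Measurable (fun (ω : ℕ → S) (i : Fin k) => ω (i : ℕ)) :=
    fun k => measurable_pi_lambda _ fun i => measurable_pi_apply _
  have hGmeas : ∀ (n k : ℕ) (h : n ≤ k + 1),
      Measurable (fun x : Fin (k + 1) → S =>
        ((fun i : Fin n => x (Fin.castLE h i)), x (Fin.last k))) :=
    fun n k h => Measurable.prodMk (measurable_pi_lambda _ fun i => measurable_pi_apply _)
      (measurable_pi_apply _)
  have hfdd := fdd_key ν 𝓗 Hf q κ h𝓗count h𝓗meas h𝓗pos h𝓗disj h𝓗cover h𝓗finer hHf hq01 hκ0 hκ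
  constructor
  · -- identity of the first two marginals
    show P.map (fun ω => ω 1) = P.map (fun ω => ω 0)
    have e : ∀ k : ℕ, P.map (fun ω => ω k) =
        ((stratFDD κ (k + 1)).map (fun x : Fin (k + 1) → S =>
          ((fun i : Fin 0 => x (Fin.castLE (Nat.zero_le _) i)), x (Fin.last k)))).map
            Prod.snd := by
      intro k
      rw [← hP (k + 1), Measure.map_map (hGmeas 0 k (Nat.zero_le _)) (hπ (k + 1)),
        Measure.map_map measurable_snd ((hGmeas 0 k (Nat.zero_le _)).comp (hπ (k + 1)))]
      rfl
    rw [e 1, e 0, hfdd 0 1 (Nat.zero_le 1)]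
  · intro n m hn hnm A hA
    -- the joint law of the first `n` coordinates and coordinate `k`
    have hFmeas : ∀ k : ℕ, Measurable (fun ω : ℕ → S => ((fun i : Fin n => ω (i : ℕ)), ω k)) :=
      fun k => (hπ n).prodMk (measurable_pi_apply _)
    have hjoint : P.map (fun ω : ℕ → S => ((fun i : Fin n => ω (i : ℕ)), ω m))
        = P.map (fun ω : ℕ → S => ((fun i : Fin n => ω (i : ℕ)), ω n)) := by
      have hcomp : ∀ (k : ℕ) (hk : n ≤ k),
          (fun ω : ℕ → S => ((fun i : Fin n => ω (i : ℕ)), ω k))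
            = (fun x : Fin (k + 1) → S =>
                ((fun i : Fin n => x (Fin.castLE (Nat.le_succ_of_le hk) i)), x (Fin.last k)))
              ∘ (fun ω (i : Fin (k + 1)) => ω (i : ℕ)) := fun k hk => rfl
      rw [hcomp m hnm, hcomp n le_rfl,
        ← Measure.map_map (hGmeas n m (Nat.le_succ_of_le hnm)) (hπ (m + 1)),
        ← Measure.map_map (hGmeas n n (Nat.le_succ n)) (hπ (n + 1)),
        hP (m + 1), hP (n + 1), hfdd n m hnm]
    have hle : MeasurableSpace.comap (fun (ω : ℕ → S) (i : Fin n) => ω (i : ℕ)) inferInstance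
        ≤ (inferInstance : MeasurableSpace (ℕ → S)) := (hπ n).comap_le
    haveI : SigmaFinite (P.trim hle) := by infer_instance
    have hint : ∀ k : ℕ,
        Integrable (Set.indicator ((fun ω : ℕ → S => ω k) ⁻¹' A) (fun _ => (1 : ℝ))) P :=
      fun k => (integrable_const 1).indicator ((measurable_pi_apply k) hA)
    refine (ae_eq_condExp_of_forall_setIntegral_eq hle (hint m)
      (fun s _ _ => integrable_condExp.integrableOn) (fun s hs hμs => ?_)
      stronglyMeasurable_condExp.aestronglyMeasurable).symm
    rw [setIntegral_condExp hle (hint n) hs]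
    obtain ⟨B, hB, rfl⟩ := hs
    have hkey : ∀ k : ℕ,
        ∫ x in (fun (ω : ℕ → S) (i : Fin n) => ω (i : ℕ)) ⁻¹' B,
            Set.indicator ((fun ω : ℕ → S => ω k) ⁻¹' A) (fun _ => (1 : ℝ)) x ∂P
          = ((P.map (fun ω : ℕ → S => ((fun i : Fin n => ω (i : ℕ)), ω k))) (B ×ˢ A)).toReal := by
      intro k
      have htm : MeasurableSet ((fun ω : ℕ → S => ω k) ⁻¹' A) := (measurable_pi_apply k) hA
      rw [show (fun _ : ℕ → S => (1 : ℝ)) = 1 from rfl, integral_indicator_one htm, measureReal_def, Measure.restrict_apply htm,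
        Measure.map_apply (hFmeas k) (hB.prod hA), Set.mk_preimage_prod, Set.inter_comm]
    rw [hkey n, hkey m, hjoint]

end PredictiveBayes
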